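/- arXiv:math/0607063 — 4 statements merged into one kernel-verified Lean document; each statement's English description precedes it below -/
import Mathlib

section
/- Ahlfors' Schwarzian S₁φ of a C³ curve φ : (a,b) → ℝⁿ with φ'(x) ≠ 0 transforms under smooth reparametrization x = x(t) with x'(t) ≠ 0 by the chain rule S₁(φ∘x)(t) = S₁φ(x(t))·x'(t)² + Sx(t), where Sx is the classical (real) Schwarzian of x. -/
open Set

/-- Ahlfors' Schwarzian derivative of a curve `φ : ℝ → ℝⁿ`:
`S₁φ = ⟨φ''',φ'⟩/|φ'|² - 3⟨φ'',φ'⟩²/|φ'|⁴ + (3/2)|φ''|²/|φ'|²`. -/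
noncomputable def ahlforsS1 {n : ℕ} (φ : ℝ → EuclideanSpace ℝ (Fin n)) (x : ℝ) : ℝ :=
  (inner ℝ (iteratedDeriv 3 φ x) (deriv φ x) : ℝ) / ‖deriv φ x‖^2
    - 3 * ((inner ℝ (iteratedDeriv 2 φ x) (deriv φ x) : ℝ))^2 / ‖deriv φ x‖^4
    + (3/2) * ‖iteratedDeriv 2 φ x‖^2 / ‖deriv φ x‖^2

/-- The classical real Schwarzian `Sx = (x''/x')' - (1/2)(x''/x')²`. -/
noncomputable def realSchwarzian (f : ℝ → ℝ) (t : ℝ) : ℝ :=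
  deriv (fun s => deriv (deriv f) s / deriv f s) t
    - (1/2) * (deriv (deriv f) t / deriv f t)^2

/-- Helper: chain rule for a vector-valued function composed with a real function. -/
lemma hasDerivAt_comp_aux {F : Type*} [NormedAddCommGroup F] [NormedSpace ℝ F]
    {g : ℝ → F} {g' : F} {x : ℝ → ℝ} {x' s : ℝ}
    (hg : HasDerivAt g g' (x s)) (hx : HasDerivAt x x' s) :
    HasDerivAt (fun t => g (x t)) (x' • g') s :=
  hg.scomp s hx

set_option maxHeartbeats 4000000 in
/-- Ahlfors' Schwarzian transforms under reparametrization by the chain rule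
`S₁(φ∘x)(t) = S₁φ(x(t))·x'(t)² + Sx(t)`. -/
theorem ahlforsS1_comp {n : ℕ} (a b c d : ℝ)
    (φ : ℝ → EuclideanSpace ℝ (Fin n)) (x : ℝ → ℝ)
    (hφ : ContDiffOn ℝ 3 φ (Ioo a b)) (hφ' : ∀ s ∈ Ioo a b, deriv φ s ≠ 0)
    (hx : ContDiffOn ℝ 3 x (Ioo c d)) (hx' : ∀ t ∈ Ioo c d, deriv x t ≠ 0)
    (hmaps : MapsTo x (Ioo c d) (Ioo a b)) :
    ∀ t ∈ Ioo c d,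
      ahlforsS1 (φ ∘ x) t = ahlforsS1 φ (x t) * (deriv x t)^2 + realSchwarzian x t := by
  have hO1 : IsOpen (Ioo c d) := isOpen_Ioo
  have hO2 : IsOpen (Ioo a b) := isOpen_Ioo
  have hx1 : ContDiffOn ℝ 2 (deriv x) (Ioo c d) :=
    hx.deriv_of_isOpen hO1 (by norm_num)
  have hx2 : ContDiffOn ℝ 1 (deriv (deriv x)) (Ioo c d) :=
    hx1.deriv_of_isOpen hO1 (by norm_num)
  have hφ1 : ContDiffOn ℝ 2 (deriv φ) (Ioo a b) :=
    hφ.deriv_of_isOpen hO2 (by norm_num)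
  have hφ2 : ContDiffOn ℝ 1 (deriv (deriv φ)) (Ioo a b) :=
    hφ1.deriv_of_isOpen hO2 (by norm_num)
  have dx : ∀ s ∈ Ioo c d, DifferentiableAt ℝ x s := fun s hs =>
    (hx.contDiffAt (hO1.mem_nhds hs)).differentiableAt (by norm_num)
  have dx1 : ∀ s ∈ Ioo c d, DifferentiableAt ℝ (deriv x) s := fun s hs =>
    (hx1.contDiffAt (hO1.mem_nhds hs)).differentiableAt (by norm_num)
  have dx2 : ∀ s ∈ Ioo c d, DifferentiableAt ℝ (deriv (deriv x)) s := fun s hs =>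
    (hx2.contDiffAt (hO1.mem_nhds hs)).differentiableAt (by norm_num)
  have dφ : ∀ s ∈ Ioo a b, DifferentiableAt ℝ φ s := fun s hs =>
    (hφ.contDiffAt (hO2.mem_nhds hs)).differentiableAt (by norm_num)
  have dφ1 : ∀ s ∈ Ioo a b, DifferentiableAt ℝ (deriv φ) s := fun s hs =>
    (hφ1.contDiffAt (hO2.mem_nhds hs)).differentiableAt (by norm_num)
  have dφ2 : ∀ s ∈ Ioo a b, DifferentiableAt ℝ (deriv (deriv φ)) s := fun s hs =>
    (hφ2.contDiffAt (hO2.mem_nhds hs)).differentiableAt (by norm_num)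
  have E1 : ∀ s ∈ Ioo c d, deriv (φ ∘ x) s = deriv x s • deriv φ (x s) := by
    intro s hs
    have h : HasDerivAt (fun r => φ (x r)) (deriv x s • deriv φ (x s)) s :=
      hasDerivAt_comp_aux ((dφ (x s) (hmaps hs)).hasDerivAt) ((dx s hs).hasDerivAt)
    exact h.deriv
  have E2 : ∀ s ∈ Ioo c d, deriv (deriv (φ ∘ x)) s
      = deriv x s • (deriv x s • deriv (deriv φ) (x s)) + deriv (deriv x) s • deriv φ (x s) := by
    intro s hs
    have heq : deriv (φ ∘ x) =ᶠ[nhds s] fun r => deriv x r • deriv φ (x r) :=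
      Filter.eventuallyEq_of_mem (hO1.mem_nhds hs) E1
    rw [heq.deriv_eq]
    exact (((dx1 s hs).hasDerivAt).smul
      (hasDerivAt_comp_aux ((dφ1 (x s) (hmaps hs)).hasDerivAt) ((dx s hs).hasDerivAt))).deriv
  intro t ht
  have hXt : x t ∈ Ioo a b := hmaps ht
  have hv : deriv x t ≠ 0 := hx' t ht
  have hp1 : deriv φ (x t) ≠ 0 := hφ' (x t) hXt
  -- third derivative of the composition
  have E3 : deriv (deriv (deriv (φ ∘ x))) t
      = (deriv x t • (deriv x t • (deriv x t • deriv (deriv (deriv φ)) (x t))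
          + deriv (deriv x) t • deriv (deriv φ) (x t))
        + deriv (deriv x) t • (deriv x t • deriv (deriv φ) (x t)))
        + (deriv (deriv x) t • (deriv x t • deriv (deriv φ) (x t))
          + deriv (deriv (deriv x)) t • deriv φ (x t)) := by
    have heq : deriv (deriv (φ ∘ x)) =ᶠ[nhds t]
        fun s => deriv x s • (deriv x s • deriv (deriv φ) (x s))
          + deriv (deriv x) s • deriv φ (x s) :=
      Filter.eventuallyEq_of_mem (hO1.mem_nhds ht) E2
    rw [heq.deriv_eq]
    have h1 : HasDerivAt (fun s => deriv x s • deriv (deriv φ) (x s))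
        (deriv x t • (deriv x t • deriv (deriv (deriv φ)) (x t))
          + deriv (deriv x) t • deriv (deriv φ) (x t)) t :=
      ((dx1 t ht).hasDerivAt).smul
        (hasDerivAt_comp_aux ((dφ2 (x t) hXt).hasDerivAt) ((dx t ht).hasDerivAt))
    have h2 : HasDerivAt (fun s => deriv x s • (deriv x s • deriv (deriv φ) (x s)))
        (deriv x t • (deriv x t • (deriv x t • deriv (deriv (deriv φ)) (x t))
            + deriv (deriv x) t • deriv (deriv φ) (x t))
          + deriv (deriv x) t • (deriv x t • deriv (deriv φ) (x t))) t :=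
      ((dx1 t ht).hasDerivAt).smul h1
    have h3 : HasDerivAt (fun s => deriv (deriv x) s • deriv φ (x s))
        (deriv (deriv x) t • (deriv x t • deriv (deriv φ) (x t))
          + deriv (deriv (deriv x)) t • deriv φ (x t)) t :=
      ((dx2 t ht).hasDerivAt).smul
        (hasDerivAt_comp_aux ((dφ1 (x t) hXt).hasDerivAt) ((dx t ht).hasDerivAt))
    exact (h2.add h3).deriv
  -- the Schwarzian quotient derivative
  have Ediv : deriv (fun s => deriv (deriv x) s / deriv x s) t
      = (deriv (deriv (deriv x)) t * deriv x t
          - deriv (deriv x) t * deriv (deriv x) t) / deriv x t ^ 2 :=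
    (((dx2 t ht).hasDerivAt).div ((dx1 t ht).hasDerivAt) hv).deriv
  -- abbreviations
  set p1 := deriv φ (x t) with hp1def
  set p2 := deriv (deriv φ) (x t) with hp2def
  set p3 := deriv (deriv (deriv φ)) (x t) with hp3def
  set v := deriv x t with hvdef
  set w := deriv (deriv x) t with hwdef
  set z := deriv (deriv (deriv x)) t with hzdef
  have hA : (inner ℝ p1 p1 : ℝ) ≠ 0 := by
    rw [inner_self_ne_zero]; exact hp1
  have h2norm : ∀ u : EuclideanSpace ℝ (Fin n), ‖u‖^2 = (inner ℝ u u : ℝ) :=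
    fun u => (real_inner_self_eq_norm_sq u).symm
  have h4norm : ∀ u : EuclideanSpace ℝ (Fin n), ‖u‖^4 = (inner ℝ u u : ℝ)^2 := by
    intro u; rw [real_inner_self_eq_norm_sq]; ring
  have i2 : ∀ f : ℝ → EuclideanSpace ℝ (Fin n), iteratedDeriv 2 f = deriv (deriv f) := by
    intro f
    rw [show (2:ℕ) = 1+1 from rfl, iteratedDeriv_succ, iteratedDeriv_one]
  have i3 : ∀ f : ℝ → EuclideanSpace ℝ (Fin n), iteratedDeriv 3 f = deriv (deriv (deriv f)) := by
    intro f
    rw [show (3:ℕ) = 2+1 from rfl, iteratedDeriv_succ, i2]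
  rw [ahlforsS1, ahlforsS1, realSchwarzian, i2, i2, i3, i3, Ediv, E1 t ht, E2 t ht, E3]
  simp only [h2norm, h4norm, inner_add_left, inner_add_right, real_inner_smul_left,
    real_inner_smul_right, real_inner_comm p1 p2, real_inner_comm p1 p3]
  set A := (inner ℝ p1 p1 : ℝ) with hAdef
  set B := (inner ℝ p2 p1 : ℝ) with hBdef
  set C := (inner ℝ p3 p1 : ℝ) with hCdef
  set D := (inner ℝ p2 p2 : ℝ) with hDdef
  simp only [← hvdef, ← hwdef, ← hp1def, ← hp2def]
  rw [real_inner_comm p2 p1, ← hBdef]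
  field_simp
  ring
end

section
/- For a C³ curve φ : (a,b) → ℝⁿ with φ'(x) ≠ 0, Ahlfors' Schwarzian satisfies S₁φ = S(s) + (1/2)v²κ², where v = |φ'|, s(x) = ∫ v is the arclength function, S(s) = (v'/v)' - (1/2)(v'/v)² is the real Schwarzian of s, and κ is the curvature of the curve. -/
open Set

/-- `S₁φ = S(s) + (1/2)v²κ²` where `v = |φ'|`, `S(s) = (v'/v)' - (1/2)(v'/v)²`
is the Schwarzian of the arclength function, and `κ` is the curvature,
`κ² = (|φ''|²|φ'|² - ⟨φ'',φ'⟩²)/|φ'|⁶`. -/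
theorem ahlforsS1_eq_schwarzian_arclength_add_curvature {n : ℕ} (a b : ℝ)
    (φ : ℝ → EuclideanSpace ℝ (Fin n))
    (hφ : ContDiffOn ℝ 3 φ (Ioo a b)) (hφ' : ∀ s ∈ Ioo a b, deriv φ s ≠ 0) :
    ∀ x ∈ Ioo a b,
      ahlforsS1 φ x =
        (deriv (fun y => deriv (fun s => ‖deriv φ s‖) y / ‖deriv φ y‖) x
            - (1/2) * (deriv (fun s => ‖deriv φ s‖) x / ‖deriv φ x‖)^2)
        + (1/2) * ‖deriv φ x‖^2 *
          ((‖iteratedDeriv 2 φ x‖^2 * ‖deriv φ x‖^2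
              - (inner ℝ (iteratedDeriv 2 φ x) (deriv φ x) : ℝ)^2) / ‖deriv φ x‖^6) := by
  intro x hx
  have hO : IsOpen (Ioo a b) := isOpen_Ioo
  have hmem : ∀ y ∈ Ioo a b, Ioo a b ∈ nhds y := fun y hy => hO.mem_nhds hy
  -- derivatives of φ
  have h1 : ContDiffOn ℝ 2 (deriv φ) (Ioo a b) := by
    have := hφ.deriv_of_isOpen hO (m := 2) (by norm_num)
    exact this
  have h2 : ContDiffOn ℝ 1 (deriv (deriv φ)) (Ioo a b) := by
    have := h1.deriv_of_isOpen hO (m := 1) (by norm_num)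
    exact this
  have dφ : ∀ y ∈ Ioo a b, HasDerivAt φ (deriv φ y) y := fun y hy =>
    ((hφ.differentiableOn (by norm_num)).differentiableAt (hmem y hy)).hasDerivAt
  have dφ1 : ∀ y ∈ Ioo a b, HasDerivAt (deriv φ) (deriv (deriv φ) y) y := fun y hy =>
    ((h1.differentiableOn (by norm_num)).differentiableAt (hmem y hy)).hasDerivAt
  have dφ2 : ∀ y ∈ Ioo a b, HasDerivAt (deriv (deriv φ)) (deriv (deriv (deriv φ)) y) y :=
    fun y hy =>
    ((h2.differentiableOn (by norm_num)).differentiableAt (hmem y hy)).hasDerivAt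
  have hv : ∀ y ∈ Ioo a b, (0:ℝ) < ‖deriv φ y‖ := fun y hy => norm_pos_iff.mpr (hφ' y hy)
  -- iterated derivs
  have hit2 : iteratedDeriv 2 φ = deriv (deriv φ) := by
    rw [iteratedDeriv_succ, iteratedDeriv_one]
  have hit3 : iteratedDeriv 3 φ = deriv (deriv (deriv φ)) := by
    rw [iteratedDeriv_succ, hit2]
  -- derivative of norm of deriv φ
  have hnorm : ∀ y ∈ Ioo a b, HasDerivAt (fun s => ‖deriv φ s‖)
      ((inner ℝ (deriv (deriv φ) y) (deriv φ y) : ℝ) / ‖deriv φ y‖) y := by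
    intro y hy
    have hinner : HasDerivAt (fun s => (inner ℝ (deriv φ s) (deriv φ s) : ℝ))
        ((inner ℝ (deriv φ y) (deriv (deriv φ) y) : ℝ)
          + (inner ℝ (deriv (deriv φ) y) (deriv φ y) : ℝ)) y :=
      (dφ1 y hy).inner ℝ (dφ1 y hy)
    have hne : (inner ℝ (deriv φ y) (deriv φ y) : ℝ) ≠ 0 := by
      rw [real_inner_self_eq_norm_sq]
      exact (pow_pos (hv y hy) 2).ne'
    have := hinner.sqrt hne
    have heq : (fun s => Real.sqrt (inner ℝ (deriv φ s) (deriv φ s) : ℝ))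
        = fun s => ‖deriv φ s‖ := by
      funext s
      rw [real_inner_self_eq_norm_sq, Real.sqrt_sq (norm_nonneg _)]
    rw [heq] at this
    convert this using 1
    rw [real_inner_self_eq_norm_sq, Real.sqrt_sq (norm_nonneg _),
      real_inner_comm (deriv φ y)]
    field_simp
    ring
  set v := ‖deriv φ x‖ with hvdef
  have hvx : (0:ℝ) < v := hv x hx
  set A : ℝ := (inner ℝ (deriv (deriv φ) x) (deriv φ x) : ℝ) with hA
  set B : ℝ := ‖deriv (deriv φ) x‖^2 with hB
  set C : ℝ := (inner ℝ (deriv (deriv (deriv φ)) x) (deriv φ x) : ℝ) with hC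
  -- deriv of the norm at x
  have hderivnorm : deriv (fun s => ‖deriv φ s‖) x = A / v := (hnorm x hx).deriv
  -- the inner function equals G on Ioo
  have hFG : Set.EqOn (fun y => deriv (fun s => ‖deriv φ s‖) y / ‖deriv φ y‖)
      (fun y => (inner ℝ (deriv (deriv φ) y) (deriv φ y) : ℝ) / ‖deriv φ y‖^2) (Ioo a b) := by
    intro y hy
    simp only
    rw [(hnorm y hy).deriv, div_div, ← sq]
  have hFGev : (fun y => deriv (fun s => ‖deriv φ s‖) y / ‖deriv φ y‖)
      =ᶠ[nhds x] (fun y => (inner ℝ (deriv (deriv φ) y) (deriv φ y) : ℝ) / ‖deriv φ y‖^2) :=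
    Filter.eventuallyEq_of_mem (hmem x hx) hFG
  -- derivative of G at x
  have hN : HasDerivAt (fun y => (inner ℝ (deriv (deriv φ) y) (deriv φ y) : ℝ))
      ((inner ℝ (deriv (deriv φ) x) (deriv (deriv φ) x) : ℝ)
        + (inner ℝ (deriv (deriv (deriv φ)) x) (deriv φ x) : ℝ)) x :=
    (dφ2 x hx).inner ℝ (dφ1 x hx)
  have hD : HasDerivAt (fun y => ‖deriv φ y‖^2)
      ((inner ℝ (deriv φ x) (deriv (deriv φ) x) : ℝ)
        + (inner ℝ (deriv (deriv φ) x) (deriv φ x) : ℝ)) x := by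
    have : HasDerivAt (fun y => (inner ℝ (deriv φ y) (deriv φ y) : ℝ))
        ((inner ℝ (deriv φ x) (deriv (deriv φ) x) : ℝ)
          + (inner ℝ (deriv (deriv φ) x) (deriv φ x) : ℝ)) x :=
      (dφ1 x hx).inner ℝ (dφ1 x hx)
    have heq : (fun y => (inner ℝ (deriv φ y) (deriv φ y) : ℝ)) = fun y => ‖deriv φ y‖^2 := by
      funext y; rw [real_inner_self_eq_norm_sq]
    rwa [heq] at this
  have hDne : ‖deriv φ x‖^2 ≠ 0 := by positivity
  have hG : HasDerivAt (fun y => (inner ℝ (deriv (deriv φ) y) (deriv φ y) : ℝ) / ‖deriv φ y‖^2)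
      ((((inner ℝ (deriv (deriv φ) x) (deriv (deriv φ) x) : ℝ)
        + (inner ℝ (deriv (deriv (deriv φ)) x) (deriv φ x) : ℝ)) * ‖deriv φ x‖^2
        - (inner ℝ (deriv (deriv φ) x) (deriv φ x) : ℝ)
          * ((inner ℝ (deriv φ x) (deriv (deriv φ) x) : ℝ)
            + (inner ℝ (deriv (deriv φ) x) (deriv φ x) : ℝ))) / (‖deriv φ x‖^2)^2) x :=
    hN.div hD hDne
  have hderivF : deriv (fun y => deriv (fun s => ‖deriv φ s‖) y / ‖deriv φ y‖) x
      = ((B + C) * v^2 - A * (2*A)) / v^4 := by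
    rw [hFGev.deriv_eq, hG.deriv]
    rw [real_inner_self_eq_norm_sq,
      show (inner ℝ (deriv φ x) (deriv (deriv φ) x) : ℝ) = A from real_inner_comm _ _]
    ring
  -- now compute
  rw [ahlforsS1, hit2, hit3, hderivF, hderivnorm]
  rw [show (inner ℝ (deriv (deriv (deriv φ)) x) (deriv φ x) : ℝ) = C from rfl,
    show (inner ℝ (deriv (deriv φ) x) (deriv φ x) : ℝ) = A from rfl,
    show ‖deriv (deriv φ) x‖^2 = B from rfl, ← hvdef]
  have hvne : v ≠ 0 := ne_of_gt hvx
  field_simp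
  ring
end

section
/- Let p : [0,1) → (0,∞) be continuous with (1-x²)²p(x) nonincreasing on [0,1), extended to (-1,1) as an even function, and let T(z) = (iρ-z)/(1+iρz) with ρ ∈ (-1,1). Then for all x ∈ (-1,1): |T'(x)|²·p(|T(x)|) ≤ p(|x|). -/
open Set

/-- If `(1-x²)²p(x)` is nonincreasing on `[0,1)` with `p` positive and
continuous, then for the disk automorphism `T(z) = (iρ-z)/(1+iρz)` one has
`|T'(x)|² p(|T(x)|) ≤ p(|x|)` for all `x ∈ (-1,1)`. -/
theorem nehari_weight_inequality (p : ℝ → ℝ) (ρ : ℝ) (hρ : ρ ∈ Ioo (-1:ℝ) 1)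
    (hp : ContinuousOn p (Ico 0 1)) (hppos : ∀ x ∈ Ico (0:ℝ) 1, 0 < p x)
    (hmono : AntitoneOn (fun x => (1 - x^2)^2 * p x) (Ico (0:ℝ) 1)) :
    ∀ x ∈ Ioo (-1:ℝ) 1,
      (‖
          (deriv (fun w : ℂ => (Complex.I * ρ - w) / (1 + Complex.I * ρ * w)) x)‖)^2 *
        p (‖(Complex.I * ρ - (x:ℂ)) / (1 + Complex.I * ρ * x)‖)
      ≤ p |x| := by
  rintro x ⟨hx1, hx2⟩
  obtain ⟨hρ1, hρ2⟩ := hρ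
  have hx2' : x ^ 2 < 1 := by nlinarith
  have hρ2' : ρ ^ 2 < 1 := by nlinarith
  set D : ℂ := 1 + Complex.I * ρ * x with hD
  have hDnsq : Complex.normSq D = 1 + ρ ^ 2 * x ^ 2 := by
    simp [hD, Complex.normSq_apply]; ring
  have hDpos : (0:ℝ) < 1 + ρ ^ 2 * x ^ 2 := by nlinarith
  have hDne : D ≠ 0 := by
    intro h
    rw [h, map_zero] at hDnsq
    nlinarith
  set N : ℂ := Complex.I * ρ - x with hN
  have hNnsq : Complex.normSq N = x ^ 2 + ρ ^ 2 := by
    simp [hN, Complex.normSq_apply]; ring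
  set s : ℝ := ‖N / D‖ with hs
  have hs0 : 0 ≤ s := norm_nonneg _
  have hssq : s ^ 2 = (x ^ 2 + ρ ^ 2) / (1 + ρ ^ 2 * x ^ 2) := by
    rw [hs, Complex.sq_norm, Complex.normSq_div, hDnsq, hNnsq]
  have hssq1 : s ^ 2 < 1 := by
    rw [hssq, div_lt_one hDpos]; nlinarith
  have hs1 : s < 1 := by nlinarith
  have hxs : |x| ≤ s := by
    have h : x ^ 2 ≤ s ^ 2 := by
      rw [hssq, le_div_iff₀ hDpos]
      nlinarith [mul_nonneg (mul_nonneg (sq_nonneg ρ) (by nlinarith : (0:ℝ) ≤ 1 - x ^ 2)) (by positivity : (0:ℝ) ≤ 1 + x ^ 2)]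
    nlinarith [sq_abs x, abs_nonneg x]
  have h1ms : 1 - s ^ 2 = (1 - ρ ^ 2) * (1 - x ^ 2) / (1 + ρ ^ 2 * x ^ 2) := by
    rw [hssq]; field_simp; ring
  -- derivative computation
  have hderiv : deriv (fun w : ℂ => (Complex.I * ρ - w) / (1 + Complex.I * ρ * w)) x
      = ((ρ:ℂ) ^ 2 - 1) / D ^ 2 := by
    have h1 : HasDerivAt (fun w : ℂ => Complex.I * ρ - w) (-1) x := by
      simpa using (hasDerivAt_id (x:ℂ)).const_sub (Complex.I * ρ)
    have h2 : HasDerivAt (fun w : ℂ => 1 + Complex.I * ρ * w) (Complex.I * ρ) x := by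
      simpa using ((hasDerivAt_id (x:ℂ)).const_mul (Complex.I * ρ)).const_add 1
    have h3 := (h1.div h2 hDne).deriv
    rw [show (fun w : ℂ => (Complex.I * ρ - w) / (1 + Complex.I * ρ * w)) = ((fun w : ℂ => Complex.I * ρ - w) / fun w : ℂ => 1 + Complex.I * ρ * w) from rfl, h3]
    congr 1
    linear_combination (-(ρ:ℂ) ^ 2) * Complex.I_sq
  have habs : ‖deriv (fun w : ℂ => (Complex.I * ρ - w) / (1 + Complex.I * ρ * w)) x‖
      = (1 - ρ ^ 2) / (1 + ρ ^ 2 * x ^ 2) := by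
    rw [hderiv, norm_div, norm_pow]
    have : ((ρ:ℂ) ^ 2 - 1) = ((ρ ^ 2 - 1 : ℝ) : ℂ) := by push_cast; ring
    rw [this, Complex.norm_real, Real.norm_eq_abs, abs_of_nonpos (by nlinarith), Complex.sq_norm, hDnsq]
    ring
  have hkey : (1 - s ^ 2) ^ 2 * p s ≤ (1 - |x| ^ 2) ^ 2 * p |x| :=
    hmono ⟨abs_nonneg x, abs_lt.mpr ⟨hx1, hx2⟩⟩ ⟨hs0, hs1⟩ hxs
  rw [habs]
  have hxx : (1 : ℝ) - x ^ 2 > 0 := by nlinarith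
  have hratio : (1 - ρ ^ 2) / (1 + ρ ^ 2 * x ^ 2) = (1 - s ^ 2) / (1 - x ^ 2) := by
    rw [h1ms]; field_simp
  rw [hratio, div_pow, div_mul_eq_mul_div, div_le_iff₀ (by positivity)]
  calc (1 - s ^ 2) ^ 2 * p s ≤ (1 - |x| ^ 2) ^ 2 * p |x| := hkey
    _ = p |x| * (1 - x ^ 2) ^ 2 := by rw [sq_abs]; ring
end

section
/- Let c > (1+√2)·e^π. For the harmonic mapping f(z) = c·e^{πz} + (1/c)·e^{-π·conj(z)} on the unit disk, with Sf(z) = -π²/2 + 4π⁴e^{-2σ(z)} and e^{2σ(z)}|K(z)| = 4π⁴e^{-2σ(z)} where e^{σ(z)} = π(c·e^{πx} + (1/c)e^{-πx}), z = x+iy, one has |Sf(z)| + e^{2σ(z)}|K(z)| = π²/2 for all z in the unit disk. -/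
open Metric

/-- For `c > (1+√2)e^π` and `f(z) = c e^{πz} + (1/c) e^{-π z̄}` on the unit
disk, with `Sf = -π²/2 + 4π⁴ e^{-2σ}` and `e^{2σ}|K| = 4π⁴ e^{-2σ}` where
`e^{σ} = π(c e^{πx} + (1/c) e^{-πx})`, one has
`|Sf| + e^{2σ}|K| = π²/2` identically on the disk. -/
theorem catenoid_extremal_equality (c : ℝ)
    (hc : c > (1 + Real.sqrt 2) * Real.exp Real.pi) :
    ∀ z ∈ ball (0:ℂ) 1,
      |(-Real.pi^2 / 2
          + 4 * Real.pi^4 *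
            Real.exp (-2 * Real.log (Real.pi *
              (c * Real.exp (Real.pi * z.re) + (1/c) * Real.exp (-Real.pi * z.re)))))|
        + 4 * Real.pi^4 *
            Real.exp (-2 * Real.log (Real.pi *
              (c * Real.exp (Real.pi * z.re) + (1/c) * Real.exp (-Real.pi * z.re))))
      = Real.pi^2 / 2 := by
  intro z hz
  have hπ := Real.pi_pos
  set x := z.re with hx
  have hx1 : |x| < 1 := by
    have h1 : ‖z‖ < 1 := by simpa [Metric.mem_ball] using hz
    exact lt_of_le_of_lt (Complex.abs_re_le_norm z) h1
  have hs2 : Real.sqrt 2 > 1 := by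
    nlinarith [Real.sq_sqrt (by norm_num : (2:ℝ) ≥ 0), Real.sqrt_nonneg 2]
  have hc0 : c > 0 := lt_trans (by positivity) hc
  set u := c * Real.exp (Real.pi * x) with hu
  have hu1 : u > 1 + Real.sqrt 2 := by
    have h1 : Real.exp Real.pi * Real.exp (Real.pi * x) ≥ 1 := by
      rw [← Real.exp_add]
      have : Real.pi + Real.pi * x ≥ 0 := by nlinarith [abs_lt.1 hx1]
      calc (1:ℝ) = Real.exp 0 := (Real.exp_zero).symm
        _ ≤ _ := Real.exp_le_exp.2 this
    have h2 : c * Real.exp (Real.pi * x) > (1 + Real.sqrt 2) * Real.exp Real.pi * Real.exp (Real.pi * x) := by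
      have := Real.exp_pos (Real.pi * x)
      nlinarith
    nlinarith
  have hinv : (1/c) * Real.exp (-Real.pi * x) = 1 / u := by
    rw [hu, one_div, one_div, mul_inv, ← Real.exp_neg]
    ring_nf
  rw [hinv]
  set s := u + 1 / u with hsdef
  have hu0 : u > 0 := by nlinarith [Real.sqrt_nonneg 2]
  have hs8 : s ^ 2 > 8 := by
    have key : (u - (1 + Real.sqrt 2)) * (u - (Real.sqrt 2 - 1)) > 0 := by
      apply mul_pos <;> nlinarith
    have hsq : Real.sqrt 2 ^ 2 = 2 := Real.sq_sqrt (by norm_num)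
    have hs2' : s > 2 * Real.sqrt 2 := by
      rw [hsdef]
      rw [gt_iff_lt, ← sub_pos]
      have : u + 1/u - 2 * Real.sqrt 2 = (u - (1 + Real.sqrt 2)) * (u - (Real.sqrt 2 - 1)) / u := by
        field_simp
        nlinarith
      rw [this]
      positivity
    nlinarith [Real.sqrt_nonneg 2]
  have hs0 : s > 0 := by rw [hsdef]; positivity
  have hA0 : Real.pi * s > 0 := by positivity
  set E := Real.exp (-2 * Real.log (Real.pi * s)) with hE
  have hE1 : E * (Real.pi * s) ^ 2 = 1 := by
    rw [hE]
    have : (Real.pi * s) ^ 2 = Real.exp (2 * Real.log (Real.pi * s)) := by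
      rw [show (2:ℝ) * Real.log (Real.pi * s) = Real.log (Real.pi * s) + Real.log (Real.pi * s) by ring,
        Real.exp_add, Real.exp_log hA0]
      ring
    rw [this, ← Real.exp_add]
    norm_num
  have hE0 : E > 0 := Real.exp_pos _
  have hle : 4 * Real.pi ^ 4 * E ≤ Real.pi ^ 2 / 2 := by
    nlinarith [sq_nonneg Real.pi, mul_pos (mul_pos hπ hπ) hE0]
  rw [abs_of_nonpos (by nlinarith)]
  ring
end
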